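/- arXiv:1406.4361 — 3 statements merged into one kernel-verified Lean document; each statement's English description precedes it below -/
import Mathlib

section
/- For all n > 0 and for any family x₁,…,xₙ of booleans (identified with the integers 0 and 1), the following equality of integers holds: 2^{n-1} · (x₁ ∧ … ∧ xₙ) = Σ_{i=1}^{n} (−1)^{i−1} Σ_{K ∈ P(n,i)} (⊕_{k ∈ K} x_k), where P(n,i) is the set of all subsets of {1,…,n} of size exactly i. -/
/-- For all `n > 0` and any family of booleans `x : Fin n → Bool`
(identified with the integers 0 and 1), we have
`2^(n-1) · (x₁ ∧ … ∧ xₙ) = Σ_{i=1}^n (−1)^(i−1) Σ_{K ∈ P(n,i)} (⊕_{k∈K} x k)`,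
where `P(n,i)` is the collection of subsets of `{1,…,n}` of cardinality `i`, the
conjunction is the product of the `x k` as integers, and the parity `⊕_{k∈K} x k`
is identified with an integer in `{0,1}`. -/
theorem conjunction_fourier (n : ℕ) (hn : 0 < n) (x : Fin n → Bool) :
    (2 : ℤ) ^ (n - 1) * ∏ k : Fin n, (if x k then (1 : ℤ) else 0) =
      ∑ i ∈ Finset.Icc 1 n, (-1 : ℤ) ^ (i - 1) *
        ∑ K ∈ (Finset.univ : Finset (Fin n)).powersetCard i,
          (if Odd (K.filter (fun k => x k = true)).card then (1 : ℤ) else 0) := by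
  classical
  set c : Fin n → ℤ := fun k => if x k then 1 else -1 with hc
  -- pointwise key identity
  have key : ∀ K : Finset (Fin n),
      2 * ((-1:ℤ)^(K.card - 1) * (if Odd (K.filter (fun k => x k = true)).card then (1:ℤ) else 0))
        = -(-1:ℤ)^K.card + ∏ k ∈ K, c k := by
    intro K
    have hsplit : ∏ k ∈ K, c k = (-1:ℤ) ^ (K.filter (fun k => ¬ (x k = true))).card := by
      rw [← Finset.prod_filter_mul_prod_filter_not K (fun k => x k = true)]
      rw [Finset.prod_congr rfl (fun k hk => ?_), Finset.prod_const, one_pow, one_mul]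
      · rw [Finset.prod_congr rfl (fun k hk => ?_), Finset.prod_const]
        simp only [hc, Finset.mem_filter] at hk ⊢
        simp [hk.2]
      · simp only [hc, Finset.mem_filter] at hk ⊢
        simp [hk.2]
    set i := K.card with hi
    set m := (K.filter (fun k => x k = true)).card with hm
    have hcard : m + (K.filter (fun k => ¬ (x k = true))).card = i :=
      Finset.card_filter_add_card_filter_not _
    have hpow : ∀ a : ℕ, (-1:ℤ)^a = if a % 2 = 0 then 1 else -1 := by
      intro a
      rcases Nat.even_or_odd a with h | h
      · rw [h.neg_one_pow, if_pos (Nat.even_iff.mp h)]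
      · rw [Nat.odd_iff] at h
        rw [Odd.neg_one_pow (Nat.odd_iff.mpr h), if_neg (by omega)]
    rw [hsplit, hpow, hpow, hpow]
    have hodd : Odd m ↔ m % 2 = 1 := Nat.odd_iff
    by_cases hOm : Odd m
    · rw [if_pos hOm]
      have h1 := hodd.mp hOm
      split_ifs <;> omega
    · rw [if_neg hOm]
      have h1 : m % 2 = 0 := by rw [Nat.odd_iff] at hOm; omega
      split_ifs <;> omega
  -- regroup RHS over powerset
  have hreg : ∑ i ∈ Finset.Icc 1 n, (-1 : ℤ) ^ (i - 1) *
        ∑ K ∈ (Finset.univ : Finset (Fin n)).powersetCard i,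
          (if Odd (K.filter (fun k => x k = true)).card then (1 : ℤ) else 0)
      = ∑ K ∈ (Finset.univ : Finset (Fin n)).powerset,
          (-1:ℤ)^(K.card - 1) * (if Odd (K.filter (fun k => x k = true)).card then (1:ℤ) else 0) := by
    rw [Finset.powerset_card_disjiUnion]
    erw [Finset.sum_disjiUnion]
    rw [Finset.card_univ, Fintype.card_fin]
    have h0 : (0:ℕ) ∉ Finset.Icc 1 n := by simp
    rw [show Finset.range (n+1) = insert 0 (Finset.Icc 1 n) by
      ext a; simp [Finset.mem_range, Finset.mem_Icc]; omega]
    rw [Finset.sum_insert h0]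
    have hzero : ∑ K ∈ (Finset.univ : Finset (Fin n)).powersetCard 0,
        (-1:ℤ)^(K.card - 1) * (if Odd (K.filter (fun k => x k = true)).card then (1:ℤ) else 0) = 0 := by
      simp [Finset.powersetCard_zero]
    rw [hzero, zero_add]
    refine Finset.sum_congr rfl fun i hi => ?_
    rw [Finset.mul_sum]
    refine Finset.sum_congr rfl fun K hK => ?_
    rw [(Finset.mem_powersetCard.mp hK).2]
  rw [hreg]
  apply mul_left_cancel₀ (two_ne_zero (α := ℤ))
  rw [Finset.mul_sum, Finset.sum_congr rfl (fun K hK => key K)]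
  rw [Finset.sum_add_distrib, Finset.sum_neg_distrib,
    Finset.sum_powerset_neg_one_pow_card_of_nonempty (by haveI := Fin.pos_iff_nonempty.mp hn; exact Finset.univ_nonempty), neg_zero, zero_add]
  have hS : ∑ K ∈ (Finset.univ : Finset (Fin n)).powerset, ∏ k ∈ K, c k
      = 2^n * ∏ k : Fin n, (if x k then (1:ℤ) else 0) := by
    have h1 := Finset.prod_add c (fun _ => (1:ℤ)) Finset.univ
    simp only [Finset.prod_const_one, mul_one] at h1
    rw [← h1]
    calc ∏ k : Fin n, (c k + 1)
        = ∏ k : Fin n, (2 * (if x k then (1:ℤ) else 0)) := by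
          refine Finset.prod_congr rfl fun k _ => ?_
          by_cases h : x k <;> simp [hc, h]
      _ = 2^n * ∏ k : Fin n, (if x k then (1:ℤ) else 0) := by
          rw [Finset.prod_mul_distrib, Finset.prod_const, Finset.card_univ, Fintype.card_fin]
  rw [hS, ← mul_assoc]
  congr 1
  rw [← pow_succ']
  congr 1
  omega
end

section
/- For all n ≥ 1 and any family x₁,…,xₙ of booleans, the following equality of complex numbers holds: (−1)^{x₁ ∧ … ∧ xₙ} = ∏_{i=1}^{n} ∏_{K ∈ P(n,i)} exp( iπ · (−1)^{i−1} · (⊕_{k∈K} x_k) / 2^{n−1} ), where the conjunction x₁ ∧ … ∧ xₙ and each parity ⊕_{k∈K} x_k are identified with integers in {0,1}, and P(n,i) is the set of all subsets of {1,…,n} of size exactly i. -/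
open Complex Real

private lemma sum_Icc_powersetCard {n : ℕ} (hn : 1 ≤ n) (f : Finset (Fin n) → ℂ)
    (h0 : f ∅ = 0) :
    ∑ i ∈ Finset.Icc 1 n, ∑ K ∈ (Finset.univ : Finset (Fin n)).powersetCard i, f K
      = ∑ K ∈ (Finset.univ : Finset (Fin n)).powerset, f K := by
  rw [Finset.powerset_card_disjiUnion, Finset.sum_disjiUnion (h := (Finset.univ.pairwise_disjoint_powersetCard.set_pairwise _)), Finset.card_univ,
    Fintype.card_fin, Finset.range_eq_Ico,
    ← Finset.sum_Ico_consecutive _ (by omega : 0 ≤ 1) (by omega : 1 ≤ n + 1)]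
  have : Finset.Ico 0 1 = {0} := rfl
  rw [this, Finset.sum_singleton, Finset.powersetCard_zero, Finset.sum_singleton, h0,
    zero_add, Finset.Ico_add_one_right_eq_Icc]

private lemma sum_powerset_prod {n : ℕ} (a : Fin n → ℂ) :
    ∑ K ∈ (Finset.univ : Finset (Fin n)).powerset, ∏ k ∈ K, a k = ∏ k, (a k + 1) := by
  rw [Finset.prod_add]
  simp

private lemma prod_ite_neg_one {n : ℕ} (K : Finset (Fin n)) (p : Fin n → Prop)
    [DecidablePred p] :
    ∏ k ∈ K, (if p k then (-1 : ℂ) else 1) = (-1 : ℂ) ^ (K.filter p).card := by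
  rw [Finset.prod_ite, Finset.prod_const, Finset.prod_const, one_pow, mul_one]

/-- For all `n ≥ 1` and any family of booleans `x : Fin n → Bool`,
`(−1)^(x₁ ∧ … ∧ xₙ) = ∏_{i=1}^n ∏_{K ∈ P(n,i)} exp(iπ · (−1)^(i−1) · (⊕_{k∈K} x k) / 2^(n−1))`
as complex numbers, where the conjunction and each parity `⊕_{k∈K} x k` are
identified with integers in `{0,1}`, and `P(n,i)` is the collection of subsets of
`{1,…,n}` of cardinality `i`. -/
theorem controlled_Z_phase_decomposition (n : ℕ) (hn : 1 ≤ n) (x : Fin n → Bool) :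
    (-1 : ℂ) ^ (∏ k : Fin n, (if x k then (1 : ℕ) else 0)) =
      ∏ i ∈ Finset.Icc 1 n,
        ∏ K ∈ (Finset.univ : Finset (Fin n)).powersetCard i,
          Complex.exp (Complex.I * (Real.pi : ℂ) * (-1 : ℂ) ^ (i - 1) *
            (if Odd (K.filter (fun k => x k = true)).card then (1 : ℂ) else 0) /
              (2 : ℂ) ^ (n - 1)) := by
  classical
  simp_rw [← Complex.exp_sum]
  set c : ℂ := Complex.I * (Real.pi : ℂ) / 2 ^ n with hc
  set A : Finset (Fin n) → ℂ := fun K => ∏ k ∈ K, (if x k then (1 : ℂ) else -1) with hA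
  set B : Finset (Fin n) → ℂ := fun K => ∏ k ∈ K, (-1 : ℂ) with hB
  have hterm : ∀ i ∈ Finset.Icc 1 n, ∀ K ∈ (Finset.univ : Finset (Fin n)).powersetCard i,
      Complex.I * (Real.pi : ℂ) * (-1 : ℂ) ^ (i - 1) *
        (if Odd (K.filter (fun k => x k = true)).card then (1 : ℂ) else 0) /
          (2 : ℂ) ^ (n - 1) = c * (A K - B K) := by
    intro i hi K hK
    have hcard : K.card = i := (Finset.mem_powersetCard.mp hK).2
    have hi1 : 1 ≤ i := (Finset.mem_Icc.mp hi).1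
    have hAK : A K = (-1 : ℂ) ^ i * (-1 : ℂ) ^ (K.filter (fun k => x k = true)).card := by
      have : ∀ k, (if x k then (1 : ℂ) else -1)
          = (-1) * (if x k = true then (-1 : ℂ) else 1) := by
        intro k; cases x k <;> simp
      rw [hA]
      simp only [this]
      rw [Finset.prod_mul_distrib, Finset.prod_const, prod_ite_neg_one, hcard]
    have hBK : B K = (-1 : ℂ) ^ i := by simp [hB, Finset.prod_const, hcard]
    rw [hAK, hBK]
    rcases Nat.even_or_odd (K.filter (fun k => x k = true)).card with he | ho
    · rw [if_neg (by simpa using Nat.not_odd_iff_even.mpr he), he.neg_one_pow]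
      ring
    · rw [if_pos ho, ho.neg_one_pow]
      have h2 : (2 : ℂ) ^ n = 2 ^ (n - 1) * 2 := by
        rw [← pow_succ]; congr 1; omega
      have hm : (-1 : ℂ) ^ i = (-1) ^ (i - 1) * (-1) := by
        rw [← pow_succ]; congr 1; omega
      rw [hc, h2, hm]
      have : (2 : ℂ) ^ (n - 1) ≠ 0 := pow_ne_zero _ two_ne_zero
      field_simp
      ring
  rw [Finset.sum_congr rfl fun i hi => Finset.sum_congr rfl fun K hK => hterm i hi K hK]
  have h0 : c * (A ∅ - B ∅) = 0 := by simp [hA, hB]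
  rw [sum_Icc_powersetCard hn _ h0, ← Finset.mul_sum, Finset.sum_sub_distrib,
    sum_powerset_prod, sum_powerset_prod]
  have hB0 : ∏ k : Fin n, ((-1 : ℂ) + 1) = 0 := by
    simp only [neg_add_cancel, Finset.prod_const, Finset.card_univ, Fintype.card_fin]
    exact zero_pow (by omega)
  rw [hB0, sub_zero]
  have hprod : ∏ k : Fin n, ((if x k then (1 : ℂ) else -1) + 1)
      = ∏ k : Fin n, (if x k then (2 : ℂ) else 0) := by
    refine Finset.prod_congr rfl fun k _ => ?_
    cases h : x k <;> norm_num
  rw [hprod]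
  by_cases hall : ∀ k, x k = true
  · have h1 : ∏ k : Fin n, (if x k then (1 : ℕ) else 0) = 1 := by
      simp [hall]
    have h2 : ∏ k : Fin n, (if x k then (2 : ℂ) else 0) = 2 ^ n := by
      simp [hall, Finset.prod_const]
    rw [h1, h2, hc, pow_one]
    rw [div_mul_cancel₀ _ (pow_ne_zero n two_ne_zero)]
    rw [mul_comm, Complex.exp_pi_mul_I]
  · push_neg at hall
    obtain ⟨k, hk⟩ := hall
    have hkf : x k = false := by simpa using hk
    have h1 : ∏ k : Fin n, (if x k then (1 : ℕ) else 0) = 0 :=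
      Finset.prod_eq_zero (Finset.mem_univ k) (by simp [hkf])
    have h2 : ∏ k : Fin n, (if x k then (2 : ℂ) else 0) = 0 :=
      Finset.prod_eq_zero (Finset.mem_univ k) (by simp [hkf])
    rw [h1, h2, mul_zero, Complex.exp_zero, pow_zero]
end

section
/- For all n > 0 and any family x₁,…,xₙ of booleans (identified with the integers 0 and 1), the disjunction satisfies the following equality of integers: 2^{n-1} · (x₁ ∨ … ∨ xₙ) = 2^{n-1} − Σ_{i=1}^{n} (−1)^{i−1} Σ_{K ∈ P(n,i)} (⊕_{k ∈ K} (1 − x_k)), where P(n,i) is the set of all subsets of {1,…,n} of size exactly i. -/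
/-- For all `n > 0` and any family of booleans `x : Fin n → Bool`
(identified with the integers 0 and 1), the disjunction satisfies
`2^(n-1) · (x₁ ∨ … ∨ xₙ) = 2^(n-1) − Σ_{i=1}^n (−1)^(i−1) Σ_{K ∈ P(n,i)} (⊕_{k∈K} (1 − x k))`,
where `P(n,i)` is the collection of subsets of `{1,…,n}` of cardinality `i`, and each
parity of negations `⊕_{k∈K} (1 − x k)` is identified with an integer in `{0,1}`. -/
theorem disjunction_fourier (n : ℕ) (hn : 0 < n) (x : Fin n → Bool) :
    (2 : ℤ) ^ (n - 1) * (if ∃ k : Fin n, x k = true then (1 : ℤ) else 0) =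
      (2 : ℤ) ^ (n - 1) -
        ∑ i ∈ Finset.Icc 1 n, (-1 : ℤ) ^ (i - 1) *
          ∑ K ∈ (Finset.univ : Finset (Fin n)).powersetCard i,
            (if Odd (K.filter (fun k => x k = false)).card then (1 : ℤ) else 0) := by
  classical
  set ind : Finset (Fin n) → ℤ :=
    fun K => if Odd (K.filter (fun k => x k = false)).card then (1 : ℤ) else 0 with hind
  -- Step 1: the double sum equals a sum over all subsets
  have step1 :
      ∑ i ∈ Finset.Icc 1 n, (-1 : ℤ) ^ (i - 1) *
          ∑ K ∈ (Finset.univ : Finset (Fin n)).powersetCard i, ind K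
        = ∑ K ∈ (Finset.univ : Finset (Fin n)).powerset, -((-1 : ℤ) ^ K.card * ind K) := by
    have h1 : ∀ i ∈ Finset.Icc 1 n,
        (-1 : ℤ) ^ (i - 1) * ∑ K ∈ (Finset.univ : Finset (Fin n)).powersetCard i, ind K
          = ∑ K ∈ (Finset.univ : Finset (Fin n)).powersetCard i,
              -((-1 : ℤ) ^ K.card * ind K) := by
      intro i hi
      rw [Finset.mul_sum]
      refine Finset.sum_congr rfl fun K hK => ?_
      have hcard : K.card = i := (Finset.mem_powersetCard.mp hK).2
      have hi1 : 1 ≤ i := (Finset.mem_Icc.mp hi).1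
      have hstep : i = (i - 1) + 1 := (Nat.succ_pred_eq_of_pos hi1).symm
      have hexp : (-1 : ℤ) ^ i = -((-1 : ℤ) ^ (i - 1)) := by
        conv_lhs => rw [hstep]
        rw [pow_succ]; ring
      rw [hcard, hexp]
      ring
    rw [Finset.sum_congr rfl h1]
    have hrange : Finset.Icc 1 n = (Finset.range (n + 1)).erase 0 := by
      ext j
      simp only [Finset.mem_Icc, Finset.mem_erase, Finset.mem_range]
      omega
    have hzero :
        ∑ K ∈ (Finset.univ : Finset (Fin n)).powersetCard 0,
            -((-1 : ℤ) ^ K.card * ind K) = 0 := by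
      rw [Finset.powersetCard_zero]
      simp [hind, Nat.odd_iff]
    have hfull :
        ∑ i ∈ Finset.range (n + 1),
            ∑ K ∈ (Finset.univ : Finset (Fin n)).powersetCard i,
              -((-1 : ℤ) ^ K.card * ind K)
          = ∑ K ∈ (Finset.univ : Finset (Fin n)).powerset,
              -((-1 : ℤ) ^ K.card * ind K) := by
      rw [Finset.sum_powerset, Finset.card_univ,
        Fintype.card_fin]
    rw [hrange, ← hfull,
      ← Finset.add_sum_erase _ _ (show (0 : ℕ) ∈ Finset.range (n + 1) by simp),
      hzero, zero_add]
  rw [step1]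
  -- Step 2: compute A := ∑ K, (-1)^|K| * ind K
  set A : ℤ := ∑ K ∈ (Finset.univ : Finset (Fin n)).powerset, (-1 : ℤ) ^ K.card * ind K with hA
  have hsum_neg : ∑ K ∈ (Finset.univ : Finset (Fin n)).powerset,
      -((-1 : ℤ) ^ K.card * ind K) = -A := by
    rw [hA, ← Finset.sum_neg_distrib]
  rw [hsum_neg]
  -- 2 * ind K = 1 - (-1)^(c K)
  have htwo : ∀ K : Finset (Fin n),
      2 * ind K = 1 - (-1 : ℤ) ^ (K.filter (fun k => x k = false)).card := by
    intro K
    simp only [hind]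
    rcases Nat.even_or_odd (K.filter (fun k => x k = false)).card with h | h
    · rw [if_neg (Nat.not_odd_iff_even.mpr h), Even.neg_one_pow h]; ring
    · rw [if_pos h, Odd.neg_one_pow h]; ring
  set w : Fin n → ℤ := fun k => if x k then -1 else 1 with hw
  have hprodw : ∀ K : Finset (Fin n),
      (-1 : ℤ) ^ K.card * (-1 : ℤ) ^ (K.filter (fun k => x k = false)).card
        = ∏ k ∈ K, w k := by
    intro K
    rw [← Finset.prod_const (b := (-1 : ℤ)) (s := K),
      ← Finset.prod_const (b := (-1 : ℤ)) (s := K.filter (fun k => x k = false)),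
      Finset.prod_filter, ← Finset.prod_mul_distrib]
    refine Finset.prod_congr rfl fun k _ => ?_
    cases h : x k <;> simp [hw, h]
  have hprod_add : ∑ K ∈ (Finset.univ : Finset (Fin n)).powerset, ∏ k ∈ K, w k
      = ∏ k : Fin n, (w k + 1) := by
    rw [Finset.prod_add]
    refine Finset.sum_congr rfl fun K _ => ?_
    simp
  have hne : Nonempty (Fin n) := ⟨⟨0, hn⟩⟩
  have h2A : 2 * A = - ∏ k : Fin n, (w k + 1) := by
    rw [hA, Finset.mul_sum]
    have : ∀ K ∈ (Finset.univ : Finset (Fin n)).powerset,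
        2 * ((-1 : ℤ) ^ K.card * ind K)
          = (-1 : ℤ) ^ K.card - ∏ k ∈ K, w k := by
      intro K _
      rw [← hprodw K, ← mul_assoc, mul_comm (2 : ℤ), mul_assoc, htwo K]
      ring
    rw [Finset.sum_congr rfl this, Finset.sum_sub_distrib, hprod_add,
      Finset.sum_powerset_neg_one_pow_card_of_nonempty Finset.univ_nonempty]
    ring
  by_cases hex : ∃ k : Fin n, x k = true
  · obtain ⟨k, hk⟩ := hex
    have hz : ∏ j : Fin n, (w j + 1) = 0 :=
      Finset.prod_eq_zero (Finset.mem_univ k) (by simp [hw, hk])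
    have hA0 : A = 0 := by
      have : (2 : ℤ) * A = 2 * 0 := by rw [h2A, hz]; ring
      exact mul_left_cancel₀ two_ne_zero this
    rw [if_pos ⟨k, hk⟩, hA0]
    ring
  · have hall : ∀ k : Fin n, x k = false := by
      intro k
      cases h : x k
      · rfl
      · exact absurd ⟨k, h⟩ hex
    have hz : ∏ j : Fin n, (w j + 1) = 2 ^ n := by
      rw [show (2 : ℤ) ^ n = ∏ _j : Fin n, (2 : ℤ) by simp]
      exact Finset.prod_congr rfl fun j _ => by simp [hw, hall j]
    have hAval : A = -(2 ^ (n - 1)) := by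
      have hpow : (2 : ℤ) ^ n = 2 * 2 ^ (n - 1) := by
        conv_lhs => rw [show n = (n - 1) + 1 from (Nat.succ_pred_eq_of_pos hn).symm]
        rw [pow_succ]; ring
      have : (2 : ℤ) * A = 2 * (-(2 ^ (n - 1))) := by rw [h2A, hz, hpow]; ring
      exact mul_left_cancel₀ two_ne_zero this
    rw [if_neg hex, hAval]
    ring
end
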